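/- Fix n ≥ 2 and b ∈ ℂ, and consider the unicritical polynomial f(z) = z^n + b. Let R be the multiset of roots, counted with multiplicity, of z^n − z + b in ℂ (the finite fixed points of f), and let M be the multiset obtained by mapping each element z of R to its multiplier n z^{n−1}. Then the k-th elementary symmetric function of M equals n^k · C(n−1, k) for every 0 ≤ k ≤ n−1, while the n-th elementary symmetric function of M (the product of the n multipliers) equals n^n b^{n−1}. (Remark 2.8: together with the multiplier 0 at the fixed point ∞, this says σ_k = n^k C(n−1,k) for all k ≠ n and σ_n = n^n Y, where Y = b^{n−1} is the invariant of f; e.g. for f(z) = z² + b the finite fixed points satisfy λ₁ + λ₂ = 2 and λ₁λ₂ = 4b.) -/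

import Mathlib

open Polynomial

lemma stmt16_monic (n : ℕ) (hn : 2 ≤ n) (b : ℂ) :
    (X ^ n - X + C b : ℂ[X]).Monic := by
  have h : (X ^ n - X + C b : ℂ[X]) = X ^ n + (C b - X) := by ring
  rw [h]
  apply monic_X_pow_add
  have h1 : degree (C b - X : ℂ[X]) ≤ 1 := by
    refine le_trans (degree_sub_le _ _) ?_
    simp [degree_X]
    exact le_trans degree_C_le (by norm_num)
  refine lt_of_le_of_lt h1 ?_
  exact_mod_cast (by omega : 1 < n)

lemma stmt16_natDegree (n : ℕ) (hn : 2 ≤ n) (b : ℂ) :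
    (X ^ n - X + C b : ℂ[X]).natDegree = n := by
  compute_degree
  · simp [show n ≠ 0 by omega, show ¬ (1 = n) by omega]
  · omega

lemma stmt16_card (n : ℕ) (hn : 2 ≤ n) (b : ℂ) :
    Multiset.card (X ^ n - X + C b : ℂ[X]).roots = n := by
  rw [splits_iff_card_roots.mp (IsAlgClosed.splits _), stmt16_natDegree n hn b]

lemma stmt16_prod (n : ℕ) (hn : 2 ≤ n) (b : ℂ) :
    (X ^ n - X + C b : ℂ[X]) =
      ((X ^ n - X + C b : ℂ[X]).roots.map fun z => X - C z).prod :=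
  (IsAlgClosed.splits _).eq_prod_roots_of_monic (stmt16_monic n hn b)

lemma stmt16_key (n : ℕ) (hn : 2 ≤ n) (b : ℂ) :
    ((X ^ n - X + C b : ℂ[X]).roots.map
        fun z => X + C ((n : ℂ) * z ^ (n - 1))).prod
      = X * (X + C (n : ℂ)) ^ (n - 1) + C ((n : ℂ) ^ n * b ^ (n - 1)) := by
  obtain ⟨m, rfl⟩ : ∃ m, n = m + 1 := ⟨n - 1, by omega⟩
  have hm0 : m ≠ 0 := by omega
  simp only [Nat.add_sub_cancel]
  by_cases hb : b = 0
  · subst hb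
    have hfac : (X ^ (m + 1) - X + C 0 : ℂ[X]) = X * (X ^ m - C 1) := by
      simp only [C_0, add_zero, C_1]; ring
    have hX2 : (X ^ m - C 1 : ℂ[X]) ≠ 0 := (monic_X_pow_sub_C 1 hm0).ne_zero
    have hroots : (X ^ (m + 1) - X + C 0 : ℂ[X]).roots
        = 0 ::ₘ (X ^ m - C 1 : ℂ[X]).roots := by
      rw [hfac, roots_mul (mul_ne_zero X_ne_zero hX2), roots_X]
      rfl
    have hcard2 : Multiset.card (X ^ m - C 1 : ℂ[X]).roots = m := by
      rw [splits_iff_card_roots.mp (IsAlgClosed.splits _),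
        natDegree_X_pow_sub_C]
    have hmapped : (X ^ m - C 1 : ℂ[X]).roots.map
          (fun z => X + C (((m + 1 : ℕ) : ℂ) * z ^ m))
        = Multiset.replicate m (X + C ((m + 1 : ℕ) : ℂ)) := by
      rw [Multiset.map_congr rfl (fun z hz => ?_), Multiset.map_const', hcard2]
      have hz1 : z ^ m = 1 := by
        have := isRoot_of_mem_roots hz
        simp only [IsRoot, eval_sub, eval_pow, eval_X, eval_C] at this
        linear_combination this
      rw [hz1, mul_one]
    rw [hroots, Multiset.map_cons, Multiset.prod_cons, hmapped,
      Multiset.prod_replicate]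
    simp [zero_pow hm0]
  · -- b ≠ 0
    set p : ℂ[X] := X ^ (m + 1) - X + C b with hp
    set R := p.roots with hRdef
    have hcard : Multiset.card R = m + 1 := stmt16_card (m + 1) hn b
    have hprod : p = (R.map fun z => X - C z).prod := stmt16_prod (m + 1) hn b
    have hR : ∀ z ∈ R, z ^ (m + 1) = z - b := by
      intro z hz
      have h := isRoot_of_mem_roots hz
      simp only [hp, IsRoot, eval_add, eval_sub, eval_pow, eval_X, eval_C] at h
      linear_combination h
    have hsq : ((-1 : ℂ)) ^ (m + 1) * (-1 : ℂ) ^ (m + 1) = 1 := by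
      rw [← pow_add]
      exact Even.neg_one_pow ⟨m + 1, by ring⟩
    have hRprod : R.prod = (-1) ^ (m + 1) * b := by
      have h0 := congrArg (eval 0) hprod
      rw [eval_multiset_prod, Multiset.map_map] at h0
      have h1 : Multiset.map (eval 0 ∘ fun z => X - C z) R = Multiset.map Neg.neg R :=
        Multiset.map_congr rfl (by intro z _; simp)
      rw [h1, Multiset.prod_map_neg, hcard] at h0
      have h2 : eval 0 p = b := by simp [hp, zero_pow (show m + 1 ≠ 0 by omega)]
      rw [h2] at h0
      calc R.prod = ((-1 : ℂ)) ^ (m + 1) * ((-1 : ℂ)) ^ (m + 1) * R.prod := by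
            rw [hsq, one_mul]
        _ = (-1) ^ (m + 1) * b := by rw [mul_assoc, ← h0]
    set c : ℂ := ((m + 1 : ℕ) : ℂ) * b with hc
    have hA : (R.map fun z => C z * (X + C (((m + 1 : ℕ) : ℂ) * z ^ m))).prod
        = (R.map fun z => (X + C ((m + 1 : ℕ) : ℂ)) * C z - C c).prod := by
      refine congrArg Multiset.prod (Multiset.map_congr rfl fun z hz => ?_)
      have hzz : (C z : ℂ[X]) * C (((m + 1 : ℕ) : ℂ) * z ^ m)
          = C ((m + 1 : ℕ) : ℂ) * C z - C c := by
        rw [← C_mul, ← C_mul, ← C_sub]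
        congr 1
        have h9 : z * (((m + 1 : ℕ) : ℂ) * z ^ m) = ((m + 1 : ℕ) : ℂ) * z ^ (m + 1) := by
          ring
        rw [h9, hR z hz, hc]
        ring
      linear_combination hzz
    have hB : (R.map fun z => C z * (X + C (((m + 1 : ℕ) : ℂ) * z ^ m))).prod
        = C ((-1 : ℂ) ^ (m + 1) * b)
          * (R.map fun z => X + C (((m + 1 : ℕ) : ℂ) * z ^ m)).prod := by
      rw [Multiset.prod_map_mul]
      congr 1
      rw [Multiset.prod_hom R (C : ℂ →+* ℂ[X]), hRprod]
    have hCnz : (C ((-1 : ℂ) ^ (m + 1) * b) : ℂ[X]) ≠ 0 := by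
      simp only [ne_eq, C_eq_zero]
      exact mul_ne_zero (pow_ne_zero _ (by norm_num)) hb
    have hC : (R.map fun z => (X + C ((m + 1 : ℕ) : ℂ)) * C z - C c).prod
        = C ((-1 : ℂ) ^ (m + 1) * b)
          * (X * (X + C ((m + 1 : ℕ) : ℂ)) ^ m
             + C (((m + 1 : ℕ) : ℂ) ^ (m + 1) * b ^ m)) := by
      have heval : ∀ y : ℂ, y + ((m + 1 : ℕ) : ℂ) ≠ 0 →
          eval y ((R.map fun z => (X + C ((m + 1 : ℕ) : ℂ)) * C z - C c).prod)
            = eval y (C ((-1 : ℂ) ^ (m + 1) * b)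
              * (X * (X + C ((m + 1 : ℕ) : ℂ)) ^ m
                 + C (((m + 1 : ℕ) : ℂ) ^ (m + 1) * b ^ m))) := by
        intro y hy
        set a : ℂ := y + ((m + 1 : ℕ) : ℂ) with ha
        rw [eval_multiset_prod, Multiset.map_map]
        have h1 : Multiset.map ((fun q : ℂ[X] => eval y q)
              ∘ fun z => (X + C ((m + 1 : ℕ) : ℂ)) * C z - C c) R
            = Multiset.map (fun z => a * (z - c / a)) R := by
          refine Multiset.map_congr rfl fun z _ => ?_
          simp only [Function.comp_apply, eval_sub, eval_mul, eval_add, eval_X,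
            eval_C]
          rw [mul_sub, mul_div_cancel₀ _ hy, ha]
        rw [h1, Multiset.prod_map_mul, Multiset.map_const', Multiset.prod_replicate,
          hcard]
        have h2 : (R.map fun z => z - c / a).prod
            = (-1) ^ (m + 1) * ((c / a) ^ (m + 1) - c / a + b) := by
          have h3 := congrArg (eval (c / a)) hprod
          rw [eval_multiset_prod, Multiset.map_map] at h3
          have h4 : Multiset.map (eval (c / a) ∘ fun z => X - C z) R
              = Multiset.map (Neg.neg ∘ fun z : ℂ => z - c / a) R := by
            refine Multiset.map_congr rfl fun z _ => ?_
            simp only [Function.comp_apply, eval_sub, eval_X, eval_C]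
            ring
          rw [h4, ← Multiset.map_map, Multiset.prod_map_neg, Multiset.card_map,
            hcard] at h3
          have h5 : eval (c / a) p = (c / a) ^ (m + 1) - c / a + b := by
            simp [hp]
          rw [h5] at h3
          calc (R.map fun z => z - c / a).prod
              = ((-1 : ℂ)) ^ (m + 1) * ((-1 : ℂ)) ^ (m + 1)
                * (R.map fun z => z - c / a).prod := by rw [hsq, one_mul]
            _ = _ := by rw [mul_assoc, ← h3]
        rw [h2]
        have key5 : a ^ (m + 1) * ((c / a) ^ (m + 1) - c / a + b)
            = c ^ (m + 1) - c * a ^ m + b * a ^ (m + 1) := by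
          have e1 : a ^ (m + 1) * (c / a) ^ (m + 1) = c ^ (m + 1) := by
            rw [← mul_pow, mul_div_cancel₀ _ hy]
          have e2 : a ^ (m + 1) * (c / a) = c * a ^ m := by
            rw [pow_succ, mul_assoc, mul_div_cancel₀ _ hy, mul_comm]
          linear_combination e1 - e2
        simp only [eval_mul, eval_add, eval_C, eval_X, eval_pow]
        calc a ^ (m + 1) * ((-1) ^ (m + 1) * ((c / a) ^ (m + 1) - c / a + b))
            = (-1) ^ (m + 1) * (a ^ (m + 1) * ((c / a) ^ (m + 1) - c / a + b)) := by
              ring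
          _ = (-1) ^ (m + 1) * (c ^ (m + 1) - c * a ^ m + b * a ^ (m + 1)) := by
              rw [key5]
          _ = (-1) ^ (m + 1) * b
              * (y * (y + ((m + 1 : ℕ) : ℂ)) ^ m + ((m + 1 : ℕ) : ℂ) ^ (m + 1) * b ^ m) := by
              rw [hc, ha, mul_pow]
              push_cast
              ring
      have hdiff : ((R.map fun z => (X + C ((m + 1 : ℕ) : ℂ)) * C z - C c).prod
          - C ((-1 : ℂ) ^ (m + 1) * b)
            * (X * (X + C ((m + 1 : ℕ) : ℂ)) ^ m
               + C (((m + 1 : ℕ) : ℂ) ^ (m + 1) * b ^ m))) = 0 := by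
        apply eq_zero_of_infinite_isRoot
        apply Set.Infinite.mono (s := {y : ℂ | y ≠ -((m + 1 : ℕ) : ℂ)})
        · intro y hy
          have hy' : y + ((m + 1 : ℕ) : ℂ) ≠ 0 := fun h =>
            hy (eq_neg_of_add_eq_zero_left h)
          simp only [Set.mem_setOf_eq, IsRoot, eval_sub, heval y hy', sub_self]
        · have he : ({y : ℂ | y ≠ -((m + 1 : ℕ) : ℂ)}) = {-((m + 1 : ℕ) : ℂ)}ᶜ := by
            ext y; simp
          rw [he]
          exact (Set.finite_singleton _).infinite_compl
      exact sub_eq_zero.mp hdiff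
    apply mul_left_cancel₀ hCnz
    rw [← hB, hA, hC]

/-- Remark 2.8: for the unicritical polynomial `f(z) = zⁿ + b`, with `M` the
multiset of multipliers `n z^{n-1}` at the finite fixed points (the roots of
`zⁿ - z + b`), the `k`-th elementary symmetric function of `M` equals
`n^k C(n-1, k)` for `0 ≤ k ≤ n-1`, while the product of the `n` multipliers
equals `nⁿ b^{n-1}`. -/
theorem stmt16 (n : ℕ) (hn : 2 ≤ n) (b : ℂ) :
    let M : Multiset ℂ :=
      ((Polynomial.X ^ n - Polynomial.X + Polynomial.C b : Polynomial ℂ).roots).map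
        fun z => (n : ℂ) * z ^ (n - 1)
    (∀ k ≤ n - 1, M.esymm k = (n : ℂ) ^ k * ((n - 1).choose k : ℂ)) ∧
      M.esymm n = (n : ℂ) ^ n * b ^ (n - 1) := by
  intro M
  have hcardM : Multiset.card M = n := by
    rw [Multiset.card_map, stmt16_card n hn b]
  have hP : (M.map fun r => X + C r).prod
      = X * (X + C (n : ℂ)) ^ (n - 1) + C ((n : ℂ) ^ n * b ^ (n - 1)) := by
    rw [Multiset.map_map]
    exact stmt16_key n hn b
  constructor
  · intro k hk
    have hkn : k ≤ n := by omega
    have h1 : ((M.map fun r => X + C r).prod).coeff (n - k) = M.esymm k := by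
      rw [Multiset.prod_X_add_C_coeff M (show n - k ≤ Multiset.card M by omega),
        hcardM, Nat.sub_sub_self hkn]
    rw [← h1, hP]
    have hnk : n - k = (n - 1 - k) + 1 := by omega
    rw [coeff_add, hnk, coeff_X_mul, coeff_C, if_neg (by omega), add_zero,
      coeff_X_add_C_pow]
    rw [show n - 1 - (n - 1 - k) = k by omega, Nat.choose_symm hk]
  · have h1 : ((M.map fun r => X + C r).prod).coeff 0 = M.esymm n := by
      rw [Multiset.prod_X_add_C_coeff M (show 0 ≤ Multiset.card M by omega),
        hcardM, Nat.sub_zero]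
    rw [← h1, hP, coeff_add, mul_coeff_zero, coeff_X_zero, zero_mul, zero_add,
      coeff_C, if_pos rfl]
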